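/- Let A be a C*-algebra, J a two-sided ideal of A (not assumed closed or self-adjoint), and let a be a positive element of A belonging to the norm closure of J. Let f : ℝ → ℝ be a continuous function with f(t) = 0 for all t ≤ 1/2. Then the element f(a), obtained by applying the continuous functional calculus of a to f, belongs to J. -/

import Mathlib

/-- Let `A` be a C*-algebra, `J` a two-sided (not necessarily closed or self-adjoint) ideal
of `A`, and `a` a positive element of `A` lying in the norm closure of `J`. If `f : ℝ → ℝ`
is continuous and vanishes on `(-∞, 1/2]`, then `f(a)` (continuous functional calculus)
belongs to `J`. -/
theorem cfc_mem_of_mem_closure {A : Type*} [NonUnitalCStarAlgebra A]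
    [PartialOrder A] [StarOrderedRing A]
    (J : TwoSidedIdeal A) (a : A) (ha : 0 ≤ a) (haJ : a ∈ closure (J : Set A))
    (f : ℝ → ℝ) (hf : Continuous f) (hf0 : ∀ t : ℝ, t ≤ 1 / 2 → f t = 0) :
    cfcₙ f a ∈ J := by
  have hsa : IsSelfAdjoint a := .of_nonneg ha
  -- cutoff function m
  set m : ℝ → ℝ := fun t => min 1 (max 0 (4 * t - 1)) / Real.sqrt (max t (1 / 2)) with hm
  have hden : ∀ t : ℝ, 0 < Real.sqrt (max t (1 / 2)) := fun t =>
    Real.sqrt_pos.mpr (lt_of_lt_of_le (by norm_num) (le_max_right _ _))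
  have hmc : Continuous m := by
    apply Continuous.div (by fun_prop) (by fun_prop)
    exact fun t => (hden t).ne'
  have hm0 : m 0 = 0 := by norm_num [hm]
  have hmbound : ∀ t : ℝ, ‖m t‖ ≤ 2 := by
    intro t
    have h1 : min 1 (max 0 (4 * t - 1)) ≤ 1 := min_le_left _ _
    have h0 : 0 ≤ min 1 (max 0 (4 * t - 1)) :=
      le_min (by norm_num) (le_max_left _ _)
    have hsq : Real.sqrt (max t (1 / 2)) ^ 2 = max t (1 / 2) :=
      Real.sq_sqrt (le_trans (by norm_num) (le_max_right _ _))
    have h2 : (1 / 2 : ℝ) ≤ Real.sqrt (max t (1 / 2)) := by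
      nlinarith [hden t, hsq, le_max_right t (1 / 2 : ℝ)]
    have hmt : m t ≤ 2 := by
      rw [hm, div_le_iff₀ (hden t)]
      nlinarith
    have hmt0 : 0 ≤ m t := div_nonneg h0 (hden t).le
    rw [Real.norm_eq_abs, abs_of_nonneg hmt0]
    exact hmt
  -- G = m * id * m, equals 1 on (1/2, ∞)
  set G : ℝ → ℝ := fun t => m t * t * m t with hG
  have hG0 : G 0 = 0 := by simp [hG, hm0]
  have hfG : ∀ t : ℝ, f t * G t = f t := by
    intro t
    rcases le_or_gt t (1 / 2) with h | h
    · rw [hf0 t h]; ring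
    · have ht0 : (0:ℝ) < t := lt_trans (by norm_num) h
      have hst : Real.sqrt t * Real.sqrt t = t := Real.mul_self_sqrt ht0.le
      have hst0 : Real.sqrt t ≠ 0 := by positivity
      have hmin : min 1 (max 0 (4 * t - 1)) = 1 := by
        rw [min_eq_left]
        rw [le_max_iff]; right; linarith
      have hmax : max t (1 / 2) = t := max_eq_left h.le
      have hGt : G t = 1 := by
        simp only [hG, hm]
        rw [hmin, hmax]
        field_simp
        nlinarith [hst]
      rw [hGt]; ring
  -- key identity : m(a) * a * m(a) = G(a)
  have hf00 : f 0 = 0 := hf0 0 (by norm_num)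
  have key : cfcₙ m a * a * cfcₙ m a = cfcₙ G a := by
    calc cfcₙ m a * a * cfcₙ m a
        = cfcₙ m a * cfcₙ (id : ℝ → ℝ) a * cfcₙ m a := by rw [cfcₙ_id ℝ a]
      _ = cfcₙ (fun t => m t * id t) a * cfcₙ m a := by
          rw [cfcₙ_mul m id a hmc.continuousOn hm0 continuous_id.continuousOn rfl]
      _ = cfcₙ (fun t => (m t * id t) * m t) a := by
          rw [cfcₙ_mul _ m a (by fun_prop) (by simp [hm0]) hmc.continuousOn hm0]
      _ = cfcₙ G a := rfl
  -- f(a) * G(a) = f(a)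
  have habs : cfcₙ f a * cfcₙ G a = cfcₙ f a := by
    rw [← cfcₙ_mul f G a hf.continuousOn hf00 (by fun_prop) hG0]
    congr 1
    exact funext hfG
  -- pick b in J close to a
  rw [Metric.mem_closure_iff] at haJ
  obtain ⟨b, hbJ, hab⟩ := haJ (1 / 8) (by norm_num)
  rw [dist_eq_norm] at hab
  -- split G(a) into ideal part and small remainder
  set x := cfcₙ f a with hx
  set y := cfcₙ m a * b * cfcₙ m a with hy
  set r := cfcₙ m a * (a - b) * cfcₙ m a with hr
  have hyJ : y ∈ J := J.mul_mem_right _ _ (J.mul_mem_left _ _ hbJ)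
  have hsplit : cfcₙ G a = y + r := by
    rw [← key, hy, hr]; noncomm_ring
  have hrnorm : ‖r‖ < 1 := by
    have hma : ‖cfcₙ m a‖ ≤ 2 := norm_cfcₙ_le fun t _ => hmbound t
    have hb1 : ‖r‖ ≤ ‖cfcₙ m a‖ * ‖a - b‖ * ‖cfcₙ m a‖ :=
      (norm_mul_le _ _).trans
        (mul_le_mul_of_nonneg_right (norm_mul_le _ _) (norm_nonneg _))
    have hb2 : ‖cfcₙ m a‖ * ‖a - b‖ * ‖cfcₙ m a‖ ≤ 2 * ‖a - b‖ * 2 := by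
      gcongr
    have hb3 : 2 * ‖a - b‖ * 2 < 1 := by linarith
    linarith
  have hxid : x = x * y + x * r := by
    rw [← mul_add, ← hsplit, hx, habs]
  -- pass to the unitization to invert 1 - r
  have hrn : ‖(r : Unitization ℂ A)‖ < 1 := by
    rwa [Unitization.norm_inr]
  set u : (Unitization ℂ A)ˣ := Units.oneSub (r : Unitization ℂ A) hrn with hu
  have huval : (u : Unitization ℂ A) = 1 - (r : Unitization ℂ A) := rfl
  have h1 : (x : Unitization ℂ A) * u = ((x * y : A) : Unitization ℂ A) := by
    rw [huval, mul_sub, mul_one, ← Unitization.inr_mul]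
    have hxx : (x : Unitization ℂ A) = ((x * y : A) : Unitization ℂ A)
        + ((x * r : A) : Unitization ℂ A) := by
      rw [← Unitization.inr_add]
      exact congrArg _ hxid
    rw [hxx]; abel
  have h2 : (x : Unitization ℂ A) = ((x * y : A) : Unitization ℂ A) * ↑u⁻¹ := by
    rw [← h1, mul_assoc, Units.mul_inv, mul_one]
  set q : Unitization ℂ A := ↑u⁻¹ * (r : Unitization ℂ A) with hq
  have hinv : (↑u⁻¹ : Unitization ℂ A) = 1 + q := by
    have h := u.inv_mul
    rw [huval, mul_sub, mul_one] at h
    rw [← h, hq]; abel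
  have hqfst : q.fst = 0 := by
    rw [hq, Unitization.fst_mul, Unitization.fst_inr, mul_zero]
  have hqinr : q = ((q.snd : A) : Unitization ℂ A) := by
    conv_lhs => rw [← Unitization.inl_fst_add_inr_snd_eq q]
    rw [hqfst, Unitization.inl_zero, zero_add]
  have h3 : (x : Unitization ℂ A)
      = ((x * y + x * y * q.snd : A) : Unitization ℂ A) := by
    rw [h2, hinv, mul_add, mul_one, hqinr, ← Unitization.inr_mul,
      ← Unitization.inr_add, Unitization.snd_inr]
  have h4 : x = x * y + x * y * q.snd := Unitization.inr_injective h3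
  rw [h4]
  exact J.add_mem (J.mul_mem_left _ _ hyJ) (J.mul_mem_right _ _ (J.mul_mem_left _ _ hyJ))
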